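/- arXiv:2002.05811 — 4 statements merged into one kernel-verified Lean document; each statement's English description precedes it below -/
import Mathlib

section
/- A small category C is local with respect to the inclusion i : {0} → I of an endpoint into the interval category I = (0 → 1), in the sense that the restriction functor [I, C] → [{0}, C] ≅ C is an equivalence of categories, if and only if C is a groupoid. -/
open CategoryTheory

/-- A small category `C` is local with respect to the endpoint inclusion
`{0} → I` of the interval category `I = (0 → 1)` — i.e. the restriction functor
`[I, C] → C` (evaluation of an arrow at its domain) is an equivalence of
categories — if and only if `C` is a groupoid (every morphism is invertible). -/
theorem local_wrt_interval_iff_groupoid {C : Type u} [Category.{v} C] :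
    (Arrow.leftFunc : Arrow C ⥤ C).IsEquivalence ↔
      ∀ {X Y : C} (f : X ⟶ Y), IsIso f := by
  constructor
  · intro h X Y f
    obtain ⟨ψ, hψ⟩ := (Arrow.leftFunc (C := C)).map_surjective
      (X := Arrow.mk f) (Y := Arrow.mk (𝟙 X)) (𝟙 X)
    have hleft : ψ.left = 𝟙 X := hψ
    have hret : f ≫ ψ.right = 𝟙 X := by
      have := ψ.w
      simp [hleft] at this
      simp [this]
    have hsec : ψ.right ≫ f = 𝟙 Y := by
      have hsq : 𝟙 X ≫ (Arrow.mk f).hom = (Arrow.mk f).hom ≫ (ψ.right ≫ f) := by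
        simp [← Category.assoc, hret]
      have heq : Arrow.homMk (f := Arrow.mk f) (g := Arrow.mk f) (u := 𝟙 X) (v := ψ.right ≫ f) hsq = 𝟙 (Arrow.mk f) := by
        apply (Arrow.leftFunc (C := C)).map_injective
        simp [Arrow.leftFunc]
        rfl
      have := congrArg CommaMorphism.right heq
      simpa using this
    exact ⟨ψ.right, hret, hsec⟩
  · intro h
    have hfaith : (Arrow.leftFunc (C := C)).Faithful := by
      constructor
      intro A B φ ψ hφψ
      have hl : φ.left = ψ.left := hφψ
      apply Arrow.hom_ext _ _ hl
      have := h A.hom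
      have h1 : A.hom ≫ φ.right = φ.left ≫ B.hom := by simpa using φ.w.symm
      have h2 : A.hom ≫ ψ.right = ψ.left ≫ B.hom := by simpa using ψ.w.symm
      calc φ.right = inv A.hom ≫ (A.hom ≫ φ.right) := by simp
        _ = inv A.hom ≫ (A.hom ≫ ψ.right) := by rw [h1, h2, hl]
        _ = ψ.right := by simp
    have hfull : (Arrow.leftFunc (C := C)).Full := by
      constructor
      intro A B u
      have := h A.hom
      refine ⟨Arrow.homMk (u := u) (v := inv A.hom ≫ u ≫ B.hom) ?_, rfl⟩
      simp
      rfl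
    have hess : (Arrow.leftFunc (C := C)).EssSurj := by
      constructor
      intro X
      exact ⟨Arrow.mk (𝟙 X), ⟨Iso.refl X⟩⟩
    exact ⟨hfaith, hfull, hess⟩
end

section
/- The free groupoid functor Π₁ : Cat → Gpd (left adjoint to the inclusion of groupoids into categories) preserves finite products: for small categories C and D, the canonical map Π₁(C × D) → Π₁(C) × Π₁(D) is an isomorphism of groupoids. -/
open CategoryTheory

universe u

/-- `η : C ⥤ G` exhibits the groupoid `G` as the free groupoid `Π₁(C)` on the
category `C`: every functor from `C` to a groupoid extends uniquely along `η`. -/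
def IsFreeGroupoidOn {C : Type u} [Category.{u} C] {G : Type u} [Groupoid.{u} G]
    (η : C ⥤ G) : Prop :=
  ∀ (H : Type u) [Groupoid.{u} H], ∀ F : C ⥤ H, ∃! F' : G ⥤ H, η ⋙ F' = F

/-- The functor category into a groupoid is a groupoid. -/
noncomputable instance auxFunctorGroupoid {E : Type u} [Category.{u} E] {H : Type u}
    [Groupoid.{u} H] : Groupoid.{u} (E ⥤ H) :=
  Groupoid.ofIsIso fun f => NatIso.isIso_of_isIso_app f

/-- The product of units `ηC.prod ηD : C × D ⥤ GC × GD` is itself a free groupoid on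
`C × D`. -/
theorem aux_prod_free {C D GC GD : Type u} [Category.{u} C] [Category.{u} D]
    [Groupoid.{u} GC] [Groupoid.{u} GD]
    (ηC : C ⥤ GC) (ηD : D ⥤ GD)
    (hC : IsFreeGroupoidOn ηC) (hD : IsFreeGroupoidOn ηD) :
    IsFreeGroupoidOn (ηC.prod ηD) := by
  intro H _ F
  obtain ⟨L, hL, hLu⟩ := hC (D ⥤ H) (Functor.curry.obj F)
  obtain ⟨M, hM, hMu⟩ := hD (GC ⥤ H) L.flip
  refine ⟨Functor.uncurry.obj M.flip, ?_, ?_⟩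
  · show ηC.prod ηD ⋙ Functor.uncurry.obj M.flip = F
    rw [← Functor.uncurry_obj_curry_obj_flip_flip' ηC ηD (Functor.uncurry.obj M.flip),
      Functor.curry_obj_uncurry_obj, Functor.flip_flip, hM, Functor.flip_flip, hL,
      Functor.uncurry_obj_curry_obj]
  · intro G₁ hG₁
    have h1 : Functor.uncurry.obj (ηC ⋙ (ηD ⋙ (Functor.curry.obj G₁).flip).flip) = Functor.uncurry.obj (Functor.curry.obj F) := by
      rw [Functor.uncurry_obj_curry_obj_flip_flip', Functor.uncurry_obj_curry_obj, hG₁]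
    have h2 : ηC ⋙ (ηD ⋙ (Functor.curry.obj G₁).flip).flip = Functor.curry.obj F := Functor.uncurry_obj_injective h1
    have h3 : (ηD ⋙ (Functor.curry.obj G₁).flip).flip = L := hLu _ h2
    have h4 : ηD ⋙ (Functor.curry.obj G₁).flip = L.flip := by rw [← h3, Functor.flip_flip]
    have h5 : (Functor.curry.obj G₁).flip = M := hMu _ h4
    have h6 : Functor.curry.obj G₁ = M.flip := by rw [← h5, Functor.flip_flip]
    rw [← Functor.uncurry_obj_curry_obj G₁, h6]

/-- The free groupoid functor `Π₁ : Cat → Gpd` preserves finite products: if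
`GC = Π₁(C)`, `GD = Π₁(D)` and `G = Π₁(C × D)`, then the canonical comparison
functor `Π₁(C × D) → Π₁(C) × Π₁(D)` (the unique functor compatible with the
units) is an isomorphism of groupoids. -/
theorem freeGroupoid_preserves_products
    {C D GC GD G : Type u} [Category.{u} C] [Category.{u} D]
    [Groupoid.{u} GC] [Groupoid.{u} GD] [Groupoid.{u} G]
    (ηC : C ⥤ GC) (ηD : D ⥤ GD) (η : C × D ⥤ G)
    (hC : IsFreeGroupoidOn ηC) (hD : IsFreeGroupoidOn ηD)
    (hCD : IsFreeGroupoidOn η)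
    (K : G ⥤ GC × GD) (hK : η ⋙ K = ηC.prod ηD) :
    ∃ K' : GC × GD ⥤ G, K ⋙ K' = 𝟭 G ∧ K' ⋙ K = 𝟭 (GC × GD) := by
  have hP := aux_prod_free ηC ηD hC hD
  obtain ⟨K', hK', hK'u⟩ := hP G η
  refine ⟨K', ?_, ?_⟩
  · obtain ⟨I, hI, hIu⟩ := hCD G η
    have h1 : 𝟭 G = I := hIu _ (Functor.comp_id η)
    have h2 : K ⋙ K' = I := hIu _ (show η ⋙ K ⋙ K' = η by rw [← Functor.assoc, hK, hK'])
    rw [h2, ← h1]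
  · obtain ⟨I, hI, hIu⟩ := hP (GC × GD) (ηC.prod ηD)
    have h1 : 𝟭 (GC × GD) = I := hIu _ (Functor.comp_id _)
    have h2 : K' ⋙ K = I := hIu _
      (show ηC.prod ηD ⋙ K' ⋙ K = ηC.prod ηD by rw [← Functor.assoc, hK', hK])
    rw [h2, ← h1]
end

section
/- The free groupoid (localization at all morphisms) of a permutative category is a permutative groupoid: if C is a symmetric monoidal category whose monoidal structure is strictly associative and strictly unital, then Π₁(C) inherits a strictly associative, strictly unital symmetric monoidal structure such that the unit map C → Π₁(C) is a strict symmetric monoidal functor. -/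
open CategoryTheory

universe u

/-- A permutative (strict symmetric monoidal) structure on a category `C`:
a tensor product bifunctor which is strictly associative and strictly unital,
together with a symmetry natural isomorphism satisfying the symmetry and
hexagon axioms. -/
structure PermutativeStruct (C : Type u) [Category.{u} C] where
  /-- the tensor product bifunctor -/
  T : C × C ⥤ C
  /-- the unit object -/
  e : C
  /-- strict associativity on objects -/
  assoc : ∀ X Y Z : C, T.obj (T.obj (X, Y), Z) = T.obj (X, T.obj (Y, Z))
  /-- strict associativity as an equality of functors -/
  assoc_functor :
    Functor.prod T (𝟭 C) ⋙ T = prod.associator C C C ⋙ Functor.prod (𝟭 C) T ⋙ T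
  /-- strict left unitality -/
  unitl : Prod.sectR e C ⋙ T = 𝟭 C
  /-- strict right unitality -/
  unitr : Prod.sectL C e ⋙ T = 𝟭 C
  /-- the symmetry natural isomorphism -/
  braiding : T ≅ CategoryTheory.Prod.swap C C ⋙ T
  /-- the symmetry is an involution -/
  symmetry : ∀ X Y : C,
    braiding.hom.app (X, Y) ≫ braiding.hom.app (Y, X) = 𝟙 (T.obj (X, Y))
  /-- the hexagon axiom (in strict form) -/
  hexagon : ∀ X Y Z : C,
    braiding.hom.app (T.obj (X, Y), Z) =
      eqToHom (assoc X Y Z) ≫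
        T.map ((𝟙 X, braiding.hom.app (Y, Z)) :
          ((X, T.obj (Y, Z)) : C × C) ⟶ (X, T.obj (Z, Y))) ≫
        eqToHom (assoc X Z Y).symm ≫
        T.map ((braiding.hom.app (X, Z), 𝟙 Y) :
          ((T.obj (X, Z), Y) : C × C) ⟶ (T.obj (Z, X), Y)) ≫
        eqToHom (assoc Z X Y)

/-- A strict symmetric monoidal functor between permutative categories:
it commutes with the tensor bifunctors on the nose, preserves the unit object,
and is compatible with the symmetries. -/
structure IsStrictSymMonFunctor {C : Type u} [Category.{u} C] {D : Type u} [Category.{u} D]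
    (P : PermutativeStruct C) (Q : PermutativeStruct D) (F : C ⥤ D) : Prop where
  tensor : P.T ⋙ F = F.prod F ⋙ Q.T
  unit : F.obj P.e = Q.e
  braid : ∀ X Y : C,
    F.map (P.braiding.hom.app (X, Y)) =
      eqToHom (Functor.congr_obj tensor (X, Y)) ≫
        Q.braiding.hom.app (F.obj X, F.obj Y) ≫
        eqToHom (Functor.congr_obj tensor (Y, X)).symm

namespace FGPaux

/-- indiscrete groupoid -/
def Indis (α : Type u) : Type u := α

instance (α : Type u) : Groupoid.{u} (Indis α) where
  Hom _ _ := PUnit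
  id _ := ⟨⟩
  comp _ _ := ⟨⟩
  inv _ := ⟨⟩

variable {C : Type u} [Category.{u} C] {G : Type u} [Groupoid.{u} G]

def toIndis : C ⥤ Indis C where
  obj c := c
  map _ := ⟨⟩

noncomputable instance functorGroupoid (A : Type u) [Category.{u} A]
    (H : Type u) [Groupoid.{u} H] : Groupoid.{u} (A ⥤ H) :=
  Groupoid.ofIsIso fun f => NatIso.isIso_of_isIso_app f

noncomputable instance arrowGroupoid (H : Type u) [Groupoid.{u} H] :
    Groupoid.{u} (Arrow H) :=
  Groupoid.ofIsIso fun {X Y} f => by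
    have : f = (Arrow.isoMk (asIso f.left) (asIso f.right) f.w).hom := rfl
    rw [this]
    infer_instance

instance fullSubGroupoid (p : G → Prop) : Groupoid.{u} (ObjectProperty.FullSubcategory p) :=
  InducedCategory.groupoid G ObjectProperty.FullSubcategory.obj

theorem objSurjective {η : C ⥤ G} (hη : IsFreeGroupoidOn η) :
    Function.Surjective η.obj := by
  intro g
  let p : G → Prop := fun g => ∃ c, η.obj c = g
  let η' : C ⥤ ObjectProperty.FullSubcategory p := ObjectProperty.lift p η fun c => ⟨c, rfl⟩
  obtain ⟨r, hr, -⟩ := hη (ObjectProperty.FullSubcategory p) η'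
  have h1 : η ⋙ (r ⋙ ObjectProperty.ι p) = η := by
    rw [← Functor.assoc, hr]; rfl
  have h2 : r ⋙ ObjectProperty.ι p = 𝟭 G :=
    (hη G η).unique h1 (Functor.comp_id η)
  have h3 := Functor.congr_obj h2 g
  obtain ⟨c, hc⟩ := (r.obj g).property
  exact ⟨c, by rw [hc]; exact h3⟩

theorem objInjective {η : C ⥤ G} (hη : IsFreeGroupoidOn η) :
    Function.Injective η.obj := by
  intro x y hxy
  obtain ⟨F, hF, -⟩ := hη (Indis C) toIndis
  have hx := Functor.congr_obj hF x
  have hy := Functor.congr_obj hF y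
  simp only [Functor.comp_obj] at hx hy
  have : F.obj (η.obj x) = F.obj (η.obj y) := by rw [hxy]
  rw [hx, hy] at this
  exact this

end FGPaux

namespace FGPaux

variable {C : Type u} [Category.{u} C] {G : Type u} [Groupoid.{u} G]

/-- congruence for app of a natural transformation at equal objects -/
theorem app_congr {H : Type u} [Category.{u} H] {A : Type u} [Category.{u} A]
    {F₁ F₂ : A ⥤ H} (α : F₁ ⟶ F₂) {X Y : A} (h : X = Y) :
    α.app X = eqToHom (by rw [h]) ≫ α.app Y ≫ eqToHom (by rw [h]) := by
  subst h; simp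

theorem arrow_hom_of_eq {H : Type u} [Category.{u} H] {f g : Arrow H} (h : f = g) :
    f.hom = eqToHom (by rw [h]) ≫ g.hom ≫ eqToHom (by rw [h]) := by
  subst h; simp

/-- uniqueness of natural transformations along a free groupoid map -/
theorem natTrans_unique {η : C ⥤ G} (hη : IsFreeGroupoidOn η)
    {H : Type u} [Groupoid.{u} H] {F₁ F₂ : G ⥤ H} (α β : F₁ ⟶ F₂)
    (h : ∀ c : C, α.app (η.obj c) = β.app (η.obj c)) : α = β := by
  ext g
  obtain ⟨c, rfl⟩ := objSurjective hη g
  exact h c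

/-- the functor into the arrow category induced by a natural transformation -/
@[simps]
def natTransFunctor {H : Type u} [Category.{u} H] {X Y : C ⥤ H} (β : X ⟶ Y) :
    C ⥤ Arrow H where
  obj c := Arrow.mk (β.app c)
  map {c c'} f := Arrow.homMk (u := X.map f) (v := Y.map f) (β.naturality f)

/-- extension of natural transformations along a free groupoid map -/
theorem natTrans_extend {η : C ⥤ G} (hη : IsFreeGroupoidOn η)
    {H : Type u} [Groupoid.{u} H] {EX EY : G ⥤ H} (β : η ⋙ EX ⟶ η ⋙ EY) :
    ∃ α : EX ⟶ EY, ∀ c : C, α.app (η.obj c) = β.app c := by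
  obtain ⟨B, hB, -⟩ := hη (Arrow H) (natTransFunctor β)
  have hleft : B ⋙ Arrow.leftFunc = EX := by
    refine (hη H (η ⋙ EX)).unique ?_ rfl
    rw [← Functor.assoc, hB]
    exact CategoryTheory.Functor.ext (fun c => rfl) (by intros; exact ((Category.id_comp _).trans (Category.comp_id _)).symm)
  have hright : B ⋙ Arrow.rightFunc = EY := by
    refine (hη H (η ⋙ EY)).unique ?_ rfl
    rw [← Functor.assoc, hB]
    exact CategoryTheory.Functor.ext (fun c => rfl) (by intros; exact ((Category.id_comp _).trans (Category.comp_id _)).symm)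
  refine ⟨⟨fun g => eqToHom (Functor.congr_obj hleft g).symm ≫ (B.obj g).hom ≫
      eqToHom (Functor.congr_obj hright g), ?_⟩, ?_⟩
  · intro g g' f
    subst hleft hright
    show (B.map f).left ≫ (𝟙 _ ≫ (B.obj g').hom ≫ 𝟙 _) = (𝟙 _ ≫ (B.obj g).hom ≫ 𝟙 _) ≫ (B.map f).right
    simp only [Category.id_comp, Category.comp_id]
    exact (B.map f).w
  · intro c
    subst hleft hright
    have hobj : B.obj (η.obj c) = Arrow.mk (β.app c) := Functor.congr_obj hB c
    have := arrow_hom_of_eq hobj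
    simp only [this]
    show 𝟙 _ ≫ (𝟙 _ ≫ β.app c ≫ 𝟙 _) ≫ 𝟙 _ = β.app c
    simp

end FGPaux

namespace FGPaux

section Prod

variable {C : Type u} [Category.{u} C] {G : Type u} [Groupoid.{u} G]
variable {D : Type u} [Category.{u} D] {K : Type u} [Groupoid.{u} K]
variable {H : Type u} [Groupoid.{u} H]

/-- extension of a functor along a free groupoid map -/
noncomputable def ext {θ : D ⥤ K} (hθ : IsFreeGroupoidOn θ) (X : D ⥤ H) : K ⥤ H :=
  (hθ H X).exists.choose

theorem ext_spec {θ : D ⥤ K} (hθ : IsFreeGroupoidOn θ) (X : D ⥤ H) :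
    θ ⋙ ext hθ X = X :=
  (hθ H X).exists.choose_spec

theorem ext_obj {θ : D ⥤ K} (hθ : IsFreeGroupoidOn θ) (X : D ⥤ H) (d : D) :
    (ext hθ X).obj (θ.obj d) = X.obj d :=
  Functor.congr_obj (ext_spec hθ X) d

/-- extension of a natural transformation along a free groupoid map -/
noncomputable def extNat {θ : D ⥤ K} (hθ : IsFreeGroupoidOn θ) {X Y : D ⥤ H} (β : X ⟶ Y) :
    ext hθ X ⟶ ext hθ Y :=
  (natTrans_extend hθ (eqToHom (ext_spec hθ X) ≫ β ≫ eqToHom (ext_spec hθ Y).symm)).choose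

theorem extNat_app {θ : D ⥤ K} (hθ : IsFreeGroupoidOn θ) {X Y : D ⥤ H} (β : X ⟶ Y) (d : D) :
    (extNat hθ β).app (θ.obj d) =
      eqToHom (ext_obj hθ X d) ≫ β.app d ≫ eqToHom (ext_obj hθ Y d).symm := by
  have := (natTrans_extend hθ
    (eqToHom (ext_spec hθ X) ≫ β ≫ eqToHom (ext_spec hθ Y).symm)).choose_spec d
  rw [extNat, this]
  simp [eqToHom_app]

/-- the "curried" partial extension `C ⥤ (K ⥤ H)` of a functor `C × D ⥤ H` -/
noncomputable def aCur {θ : D ⥤ K} (hθ : IsFreeGroupoidOn θ) (F : C × D ⥤ H) :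
    C ⥤ (K ⥤ H) where
  obj c := ext hθ ((Functor.curry.obj F).obj c)
  map f := extNat hθ ((Functor.curry.obj F).map f)
  map_id c := natTrans_unique hθ _ _ (fun d => by
    rw [extNat_app]; simp)
  map_comp f g := natTrans_unique hθ _ _ (fun d => by
    rw [extNat_app]; simp [extNat_app])

theorem aCur_map {θ : D ⥤ K} (hθ : IsFreeGroupoidOn θ) (F : C × D ⥤ H)
    {c c' : C} (f : c ⟶ c') :
    (aCur hθ F).map f = extNat hθ ((Functor.curry.obj F).map f) := rfl

end Prod

end FGPaux

namespace FGPaux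

section ProdFree

variable {C : Type u} [Category.{u} C] {G : Type u} [Groupoid.{u} G]
variable {D : Type u} [Category.{u} D] {K : Type u} [Groupoid.{u} K]
variable {η : C ⥤ G} {θ : D ⥤ K}

theorem prod_ext_unique (hη : IsFreeGroupoidOn η) (hθ : IsFreeGroupoidOn θ)
    {H : Type u} [Groupoid.{u} H] (F₁ F₂ : G × K ⥤ H)
    (h : (η.prod θ) ⋙ F₁ = (η.prod θ) ⋙ F₂) : F₁ = F₂ := by
  have hkeyL : ∀ (F' : G × K ⥤ H) (d : D),
      η ⋙ (Prod.sectL G (θ.obj d) ⋙ F') = Prod.sectL C d ⋙ ((η.prod θ) ⋙ F') := by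
    intro F' d
    refine CategoryTheory.Functor.ext (fun c => rfl) (fun c c' f => ?_)
    simp [Prod.sectL]
    exact (Category.id_comp _).symm
  have hkeyR : ∀ (F' : G × K ⥤ H) (c : C),
      θ ⋙ (Prod.sectR (η.obj c) K ⋙ F') = Prod.sectR c D ⋙ ((η.prod θ) ⋙ F') := by
    intro F' c
    refine CategoryTheory.Functor.ext (fun d => rfl) (fun d d' m => ?_)
    simp [Prod.sectR]
    exact (Category.id_comp _).symm
  have hL : ∀ d : D, Prod.sectL G (θ.obj d) ⋙ F₁ = Prod.sectL G (θ.obj d) ⋙ F₂ := by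
    intro d
    refine (hη H (Prod.sectL C d ⋙ ((η.prod θ) ⋙ F₁))).unique (hkeyL F₁ d) ?_
    rw [hkeyL F₂ d, h]
  have hR : ∀ c : C, Prod.sectR (η.obj c) K ⋙ F₁ = Prod.sectR (η.obj c) K ⋙ F₂ := by
    intro c
    refine (hθ H (Prod.sectR c D ⋙ ((η.prod θ) ⋙ F₁))).unique (hkeyR F₁ c) ?_
    rw [hkeyR F₂ c, h]
  have hobj : ∀ X : G × K, F₁.obj X = F₂.obj X := by
    rintro ⟨g, k⟩
    obtain ⟨c, rfl⟩ := objSurjective hη g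
    obtain ⟨d, rfl⟩ := objSurjective hθ k
    exact Functor.congr_obj h (c, d)
  refine CategoryTheory.Functor.ext hobj (fun X Y f => ?_)
  obtain ⟨g, k⟩ := X
  obtain ⟨g', k'⟩ := Y
  obtain ⟨f, m⟩ := f
  obtain ⟨d, rfl⟩ := objSurjective hθ k
  obtain ⟨c', rfl⟩ := objSurjective hη g'
  have hdec : ∀ F' : G × K ⥤ H, F'.map ((f, m) : (g, θ.obj d) ⟶ (η.obj c', k')) =
      F'.map ((f, 𝟙 (θ.obj d)) : (g, θ.obj d) ⟶ (η.obj c', θ.obj d)) ≫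
      F'.map ((𝟙 (η.obj c'), m) : (η.obj c', θ.obj d) ⟶ (η.obj c', k')) := by
    intro F'
    rw [← F'.map_comp]
    simp [prod_comp]
  rw [hdec F₁, hdec F₂]
  have e1 : F₁.map ((f, 𝟙 (θ.obj d)) : (g, θ.obj d) ⟶ (η.obj c', θ.obj d)) =
      eqToHom (Functor.congr_obj (hL d) g) ≫
        F₂.map ((f, 𝟙 (θ.obj d)) : (g, θ.obj d) ⟶ (η.obj c', θ.obj d)) ≫
        eqToHom (Functor.congr_obj (hL d) (η.obj c')).symm := by
    have := Functor.congr_hom (hL d) f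
    simpa [Prod.sectL] using this
  have e2 : F₁.map ((𝟙 (η.obj c'), m) : (η.obj c', θ.obj d) ⟶ (η.obj c', k')) =
      eqToHom (Functor.congr_obj (hR c') (θ.obj d)) ≫
        F₂.map ((𝟙 (η.obj c'), m) : (η.obj c', θ.obj d) ⟶ (η.obj c', k')) ≫
        eqToHom (Functor.congr_obj (hR c') k').symm := by
    have := Functor.congr_hom (hR c') m
    simpa [Prod.sectR] using this
  rw [e1, e2]
  erw [Category.assoc, Category.assoc, eqToHom_trans_assoc, eqToHom_refl, Category.id_comp,
    Category.assoc]
  rfl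

theorem prodFree (hη : IsFreeGroupoidOn η) (hθ : IsFreeGroupoidOn θ) :
    IsFreeGroupoidOn (η.prod θ) := by
  intro H _ F
  obtain ⟨Ahat, hA, -⟩ := hη (K ⥤ H) (aCur hθ F)
  have hfac : (η.prod θ) ⋙ Functor.uncurry.obj Ahat = F := by
    have hobj : ∀ X : C × D, ((η.prod θ) ⋙ Functor.uncurry.obj Ahat).obj X = F.obj X := by
      intro X
      have h1 : Ahat.obj (η.obj X.1) = ext hθ ((Functor.curry.obj F).obj X.1) :=
        Functor.congr_obj hA X.1
      calc ((η.prod θ) ⋙ Functor.uncurry.obj Ahat).obj X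
          = (Ahat.obj (η.obj X.1)).obj (θ.obj X.2) := rfl
        _ = (ext hθ ((Functor.curry.obj F).obj X.1)).obj (θ.obj X.2) := by rw [h1]
        _ = F.obj X := ext_obj hθ _ X.2
    refine CategoryTheory.Functor.ext hobj (fun X Y f => ?_)
    have hc : Ahat.map (η.map f.1) =
        eqToHom (Functor.congr_obj hA X.1) ≫ (aCur hθ F).map f.1 ≫
          eqToHom (Functor.congr_obj hA Y.1).symm := Functor.congr_hom hA f.1
    have hm : (Ahat.obj (η.obj Y.1)).map (θ.map f.2) =
        eqToHom (congrArg (fun (Z : K ⥤ H) => Z.obj (θ.obj X.2)) (Functor.congr_obj hA Y.1)) ≫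
          (ext hθ ((Functor.curry.obj F).obj Y.1)).map (θ.map f.2) ≫
          eqToHom (congrArg (fun (Z : K ⥤ H) => Z.obj (θ.obj Y.2))
            (Functor.congr_obj hA Y.1)).symm :=
      Functor.congr_hom (Functor.congr_obj hA Y.1) (θ.map f.2)
    have hm2 : (ext hθ ((Functor.curry.obj F).obj Y.1)).map (θ.map f.2) =
        eqToHom (ext_obj hθ _ X.2) ≫ ((Functor.curry.obj F).obj Y.1).map f.2 ≫
          eqToHom (ext_obj hθ _ Y.2).symm :=
      Functor.congr_hom (ext_spec hθ ((Functor.curry.obj F).obj Y.1)) f.2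
    show (Ahat.map (η.map f.1)).app (θ.obj X.2) ≫ (Ahat.obj (η.obj Y.1)).map (θ.map f.2) = _
    rw [hc, hm, hm2, aCur_map]
    have := extNat_app hθ ((Functor.curry.obj F).map f.1) X.2
    dsimp only [aCur, Functor.comp_obj]
    simp only [NatTrans.comp_app, this]
    erw [eqToHom_app, eqToHom_app]
    have hcomp : ((f.1, 𝟙 X.2) : X ⟶ (Y.1, X.2)) ≫ ((𝟙 Y.1, f.2) : ((Y.1, X.2) : C × D) ⟶ Y)
        = f := by
      apply Prod.ext <;> simp [prod_comp]
    have hFmap : F.map f = F.map ((f.1, 𝟙 X.2) : X ⟶ (Y.1, X.2)) ≫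
        F.map ((𝟙 Y.1, f.2) : ((Y.1, X.2) : C × D) ⟶ Y) := by
      rw [← F.map_comp, hcomp]
    rw [hFmap]
    simp [Functor.curry, Functor.curryObj, eqToHom_trans]
    erw [eqToHom_trans_assoc, eqToHom_trans_assoc, eqToHom_trans, eqToHom_refl, Category.id_comp]
  refine ⟨Functor.uncurry.obj Ahat, hfac, fun F₂ hF₂ => ?_⟩
  exact prod_ext_unique hη hθ F₂ (Functor.uncurry.obj Ahat) (by rw [hF₂, hfac])

end ProdFree
end FGPaux

namespace FGPaux

section Helpers

variable {A : Type u} [Category.{u} A] {B : Type u} [Category.{u} B]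
  {E : Type u} [Category.{u} E]

theorem prod_obj_ext {a a' : A} {b b' : B} (h1 : a = a') (h2 : b = b') :
    ((a, b) : A × B) = (a', b') := by rw [h1, h2]

theorem prod_eqToHom {a a' : A} {b b' : B} (h1 : a = a') (h2 : b = b') :
    ((eqToHom h1, eqToHom h2) : ((a, b) : A × B) ⟶ (a', b')) =
      eqToHom (prod_obj_ext h1 h2) := by
  subst h1; subst h2
  simp [prod_id]

theorem map_id_eqToHom_right (T : A × B ⥤ E) (a : A) {b b' : B} (h : b = b') :
    T.map ((𝟙 a, eqToHom h) : ((a, b) : A × B) ⟶ (a, b')) =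
      eqToHom (congrArg T.obj (prod_obj_ext rfl h)) := by
  subst h
  simp only [eqToHom_refl, ← prod_id']
  exact T.map_id _

theorem map_id_eqToHom_left (T : A × B ⥤ E) {a a' : A} (h : a = a') (b : B) :
    T.map ((eqToHom h, 𝟙 b) : ((a, b) : A × B) ⟶ (a', b)) =
      eqToHom (congrArg T.obj (prod_obj_ext h rfl)) := by
  subst h
  simp only [eqToHom_refl, ← prod_id']
  exact T.map_id _

theorem map_pair_comp_right (T : A × B ⥤ E) (a : A) {b₁ b₂ b₃ : B}
    (u : b₁ ⟶ b₂) (v : b₂ ⟶ b₃) :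
    T.map ((𝟙 a, u ≫ v) : ((a, b₁) : A × B) ⟶ (a, b₃)) =
      T.map ((𝟙 a, u) : ((a, b₁) : A × B) ⟶ (a, b₂)) ≫
      T.map ((𝟙 a, v) : ((a, b₂) : A × B) ⟶ (a, b₃)) := by
  rw [← T.map_comp]
  congr 1
  apply Prod.ext <;> simp [prod_comp]

theorem map_pair_comp_left (T : A × B ⥤ E) {a₁ a₂ a₃ : A} (u : a₁ ⟶ a₂) (v : a₂ ⟶ a₃)
    (b : B) :
    T.map ((u ≫ v, 𝟙 b) : ((a₁, b) : A × B) ⟶ (a₃, b)) =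
      T.map ((u, 𝟙 b) : ((a₁, b) : A × B) ⟶ (a₂, b)) ≫
      T.map ((v, 𝟙 b) : ((a₂, b) : A × B) ⟶ (a₃, b)) := by
  rw [← T.map_comp]
  congr 1
  apply Prod.ext <;> simp [prod_comp]

theorem eqToHom_fst {x y : A × B} (h : x = y) :
    (eqToHom h).1 = eqToHom (congrArg Prod.fst h) := by subst h; rfl

theorem eqToHom_snd {x y : A × B} (h : x = y) :
    (eqToHom h).2 = eqToHom (congrArg Prod.snd h) := by subst h; rfl

end Helpers

end FGPaux

/-- The free groupoid of a permutative category is a permutative groupoid: the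
free groupoid `Π₁(C)` of a permutative category `C` inherits a permutative
(strictly associative and unital symmetric monoidal) structure making the unit
functor `C ⥤ Π₁(C)` a strict symmetric monoidal functor. -/
theorem freeGroupoid_permutative {C : Type u} [Category.{u} C]
    (P : PermutativeStruct C) {G : Type u} [Groupoid.{u} G]
    (η : C ⥤ G) (hη : IsFreeGroupoidOn η) :
    ∃ Q : PermutativeStruct G, IsStrictSymMonFunctor P Q η := by
  have hηη : IsFreeGroupoidOn (η.prod η) := FGPaux.prodFree hη hη
  have hη3 : IsFreeGroupoidOn ((η.prod η).prod η) := FGPaux.prodFree hηη hη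
  obtain ⟨T, hT, -⟩ := hηη G (P.T ⋙ η)
  -- the braiding
  have hswap : (η.prod η) ⋙ CategoryTheory.Prod.swap G G = CategoryTheory.Prod.swap C C ⋙ (η.prod η) := rfl
  have h2 : (CategoryTheory.Prod.swap C C ⋙ P.T) ⋙ η = (η.prod η) ⋙ (CategoryTheory.Prod.swap G G ⋙ T) := by
    calc (CategoryTheory.Prod.swap C C ⋙ P.T) ⋙ η
        = CategoryTheory.Prod.swap C C ⋙ (P.T ⋙ η) := Functor.assoc _ _ _
      _ = CategoryTheory.Prod.swap C C ⋙ ((η.prod η) ⋙ T) := by rw [hT]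
      _ = (CategoryTheory.Prod.swap C C ⋙ (η.prod η)) ⋙ T := (Functor.assoc _ _ _).symm
      _ = ((η.prod η) ⋙ CategoryTheory.Prod.swap G G) ⋙ T := by rw [hswap]
      _ = (η.prod η) ⋙ (CategoryTheory.Prod.swap G G ⋙ T) := Functor.assoc _ _ _
  obtain ⟨α, hα⟩ := FGPaux.natTrans_extend hηη
    (eqToHom hT ≫ Functor.whiskerRight P.braiding.hom η ≫ eqToHom h2 :
      (η.prod η) ⋙ T ⟶ (η.prod η) ⋙ (CategoryTheory.Prod.swap G G ⋙ T))
  have hαapp : ∀ X Y : C, α.app (η.obj X, η.obj Y) =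
      eqToHom (Functor.congr_obj hT (X, Y)) ≫ η.map (P.braiding.hom.app (X, Y)) ≫
        eqToHom (Functor.congr_obj h2 (X, Y)) := by
    intro X Y
    have h' : α.app (η.obj X, η.obj Y) =
        (eqToHom hT ≫ Functor.whiskerRight P.braiding.hom η ≫ eqToHom h2).app (X, Y) := hα (X, Y)
    rw [h']
    simp [eqToHom_app]
  haveI : IsIso α := NatIso.isIso_of_isIso_app α
  -- strict unitality
  have hunitl : Prod.sectR (η.obj P.e) G ⋙ T = 𝟭 G := by
    refine (hη G η).unique ?_ (Functor.comp_id η)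
    have step : η ⋙ Prod.sectR (η.obj P.e) G = Prod.sectR P.e C ⋙ (η.prod η) :=
      CategoryTheory.Functor.ext (fun c => rfl) (by intros; simp [Prod.sectR]; exact ⟨rfl, (Category.id_comp _).symm⟩)
    calc η ⋙ (Prod.sectR (η.obj P.e) G ⋙ T)
        = (η ⋙ Prod.sectR (η.obj P.e) G) ⋙ T := (Functor.assoc _ _ _).symm
      _ = (Prod.sectR P.e C ⋙ (η.prod η)) ⋙ T := by rw [step]
      _ = Prod.sectR P.e C ⋙ ((η.prod η) ⋙ T) := Functor.assoc _ _ _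
      _ = Prod.sectR P.e C ⋙ (P.T ⋙ η) := by rw [hT]
      _ = (Prod.sectR P.e C ⋙ P.T) ⋙ η := (Functor.assoc _ _ _).symm
      _ = 𝟭 C ⋙ η := by rw [P.unitl]
      _ = η := Functor.id_comp η
  have hunitr : Prod.sectL G (η.obj P.e) ⋙ T = 𝟭 G := by
    refine (hη G η).unique ?_ (Functor.comp_id η)
    have step : η ⋙ Prod.sectL G (η.obj P.e) = Prod.sectL C P.e ⋙ (η.prod η) :=
      CategoryTheory.Functor.ext (fun c => rfl) (by intros; simp [Prod.sectL]; exact ⟨(Category.id_comp _).symm, rfl⟩)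
    calc η ⋙ (Prod.sectL G (η.obj P.e) ⋙ T)
        = (η ⋙ Prod.sectL G (η.obj P.e)) ⋙ T := (Functor.assoc _ _ _).symm
      _ = (Prod.sectL C P.e ⋙ (η.prod η)) ⋙ T := by rw [step]
      _ = Prod.sectL C P.e ⋙ ((η.prod η) ⋙ T) := Functor.assoc _ _ _
      _ = Prod.sectL C P.e ⋙ (P.T ⋙ η) := by rw [hT]
      _ = (Prod.sectL C P.e ⋙ P.T) ⋙ η := (Functor.assoc _ _ _).symm
      _ = 𝟭 C ⋙ η := by rw [P.unitr]
      _ = η := Functor.id_comp η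
  -- strict associativity
  have l1 : ((η.prod η).prod η) ⋙ (T.prod (𝟭 G)) = (P.T.prod (𝟭 C)) ⋙ (η.prod η) := by
    refine CategoryTheory.Functor.ext (fun X => ?_) (fun X Y f => ?_)
    · exact FGPaux.prod_obj_ext (Functor.congr_obj hT X.1) rfl
    · apply Prod.ext
      · simp only [prod_comp_fst, FGPaux.eqToHom_fst, Functor.prod_map, Functor.comp_map]
        exact Functor.congr_hom hT f.1
      · simp only [prod_comp_snd, FGPaux.eqToHom_snd, Functor.prod_map, Functor.comp_map]
        simp
  have r2 : (η.prod (η.prod η)) ⋙ ((𝟭 G).prod T) = ((𝟭 C).prod P.T) ⋙ (η.prod η) := by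
    refine CategoryTheory.Functor.ext (fun X => ?_) (fun X Y f => ?_)
    · exact FGPaux.prod_obj_ext rfl (Functor.congr_obj hT X.2)
    · apply Prod.ext
      · simp only [prod_comp_fst, FGPaux.eqToHom_fst, Functor.prod_map, Functor.comp_map]
        simp
      · simp only [prod_comp_snd, FGPaux.eqToHom_snd, Functor.prod_map, Functor.comp_map]
        exact Functor.congr_hom hT f.2
  have hassocrestr : ((η.prod η).prod η) ⋙ prod.associator G G G =
      prod.associator C C C ⋙ (η.prod (η.prod η)) := rfl
  have hassoc_f : Functor.prod T (𝟭 G) ⋙ T =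
      prod.associator G G G ⋙ Functor.prod (𝟭 G) T ⋙ T := by
    refine FGPaux.prod_ext_unique hηη hη _ _ ?_
    calc ((η.prod η).prod η) ⋙ (T.prod (𝟭 G) ⋙ T)
        = ((((η.prod η).prod η) ⋙ T.prod (𝟭 G)) ⋙ T) := (Functor.assoc _ _ _).symm
      _ = ((P.T.prod (𝟭 C)) ⋙ (η.prod η)) ⋙ T := by rw [l1]
      _ = (P.T.prod (𝟭 C)) ⋙ ((η.prod η) ⋙ T) := Functor.assoc _ _ _
      _ = (P.T.prod (𝟭 C)) ⋙ (P.T ⋙ η) := by rw [hT]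
      _ = ((P.T.prod (𝟭 C)) ⋙ P.T) ⋙ η := (Functor.assoc _ _ _).symm
      _ = (prod.associator C C C ⋙ (𝟭 C).prod P.T ⋙ P.T) ⋙ η := by rw [P.assoc_functor]
      _ = prod.associator C C C ⋙ (((𝟭 C).prod P.T) ⋙ (P.T ⋙ η)) := rfl
      _ = prod.associator C C C ⋙ (((𝟭 C).prod P.T) ⋙ ((η.prod η) ⋙ T)) := by rw [hT]
      _ = prod.associator C C C ⋙ ((((𝟭 C).prod P.T) ⋙ (η.prod η)) ⋙ T) := rfl
      _ = prod.associator C C C ⋙ (((η.prod (η.prod η)) ⋙ ((𝟭 G).prod T)) ⋙ T) := by rw [r2]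
      _ = (prod.associator C C C ⋙ (η.prod (η.prod η))) ⋙ (((𝟭 G).prod T) ⋙ T) := rfl
      _ = (((η.prod η).prod η) ⋙ prod.associator G G G) ⋙ (((𝟭 G).prod T) ⋙ T) := by
          rw [hassocrestr]
      _ = ((η.prod η).prod η) ⋙ (prod.associator G G G ⋙ ((𝟭 G).prod T) ⋙ T) := rfl
  -- symmetry
  have hsymm : ∀ X Y : G, α.app (X, Y) ≫ α.app (Y, X) = 𝟙 (T.obj (X, Y)) := by
    intro X Y
    obtain ⟨x, rfl⟩ := FGPaux.objSurjective hη X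
    obtain ⟨y, rfl⟩ := FGPaux.objSurjective hη Y
    rw [hαapp x y, hαapp y x]
    simp only [Category.assoc, eqToHom_trans_assoc, eqToHom_refl, Category.id_comp]
    rw [← Functor.map_comp_assoc, P.symmetry x y]
    simp
  -- hexagon
  have hhex : ∀ X Y Z : G,
      α.app (T.obj (X, Y), Z) =
        eqToHom (Functor.congr_obj hassoc_f ((X, Y), Z)) ≫
          T.map ((𝟙 X, α.app (Y, Z)) : ((X, T.obj (Y, Z)) : G × G) ⟶ (X, T.obj (Z, Y))) ≫
          eqToHom (Functor.congr_obj hassoc_f ((X, Z), Y)).symm ≫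
          T.map ((α.app (X, Z), 𝟙 Y) : ((T.obj (X, Z), Y) : G × G) ⟶ (T.obj (Z, X), Y)) ≫
          eqToHom (Functor.congr_obj hassoc_f ((Z, X), Y)) := by
    intro X Y Z
    obtain ⟨x, rfl⟩ := FGPaux.objSurjective hη X
    obtain ⟨y, rfl⟩ := FGPaux.objSurjective hη Y
    obtain ⟨z, rfl⟩ := FGPaux.objSurjective hη Z
    have hTmap : ∀ {p q : C × C} (f : p ⟶ q), T.map ((η.prod η).map f) =
        eqToHom (Functor.congr_obj hT p) ≫ η.map (P.T.map f) ≫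
          eqToHom (Functor.congr_obj hT q).symm := fun f => Functor.congr_hom hT f
    have ht_xy := Functor.congr_obj hT (x, y)
    have hpt : ((T.obj (η.obj x, η.obj y), η.obj z) : G × G) =
        ((η.obj (P.T.obj (x, y)), η.obj z) : G × G) :=
      FGPaux.prod_obj_ext ht_xy rfl
    -- left-hand side
    rw [FGPaux.app_congr α hpt, hαapp (P.T.obj (x, y)) z, P.hexagon x y z]
    -- right-hand side
    rw [hαapp y z, hαapp x z]
    erw [FGPaux.map_pair_comp_right, FGPaux.map_pair_comp_right,
      FGPaux.map_id_eqToHom_right, FGPaux.map_id_eqToHom_right]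
    erw [FGPaux.map_pair_comp_left, FGPaux.map_pair_comp_left,
      FGPaux.map_id_eqToHom_left, FGPaux.map_id_eqToHom_left]
    rw [show ((𝟙 (η.obj x), η.map (P.braiding.hom.app (y, z))) :
        ((η.obj x, η.obj (P.T.obj (y, z))) : G × G) ⟶ (η.obj x, η.obj (P.T.obj (z, y)))) =
        (η.prod η).map ((𝟙 x, P.braiding.hom.app (y, z)) :
          ((x, P.T.obj (y, z)) : C × C) ⟶ (x, P.T.obj (z, y))) from by
      apply Prod.ext <;> simp]
    rw [show ((η.map (P.braiding.hom.app (x, z)), 𝟙 (η.obj y)) :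
        ((η.obj (P.T.obj (x, z)), η.obj y) : G × G) ⟶ (η.obj (P.T.obj (z, x)), η.obj y)) =
        (η.prod η).map ((P.braiding.hom.app (x, z), 𝟙 y) :
          ((P.T.obj (x, z), y) : C × C) ⟶ (P.T.obj (z, x), y)) from by
      apply Prod.ext <;> simp]
    rw [hTmap, hTmap]
    dsimp only [Functor.comp_obj, Functor.prod_obj, Functor.id_obj, prod.associator_obj, Prod.swap_obj]
    simp only [Functor.map_comp, eqToHom_map, Category.assoc, eqToHom_trans,
      eqToHom_trans_assoc, eqToHom_refl, Category.id_comp, Category.comp_id]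
    erw [Category.assoc, Category.assoc, eqToHom_trans_assoc, eqToHom_trans_assoc, eqToHom_trans_assoc]
    rfl
  refine ⟨{ T := T, e := η.obj P.e,
            assoc := fun X Y Z => Functor.congr_obj hassoc_f ((X, Y), Z),
            assoc_functor := hassoc_f,
            unitl := hunitl, unitr := hunitr,
            braiding := asIso α,
            symmetry := fun X Y => by simpa using hsymm X Y,
            hexagon := fun X Y Z => hhex X Y Z },
          ⟨hT.symm, rfl, fun X Y => ?_⟩⟩
  show η.map (P.braiding.hom.app (X, Y)) = _ ≫ (asIso α).hom.app _ ≫ _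
  simp only [asIso_hom]
  rw [show α.app ((η.prod η).obj (X, Y)) =
      eqToHom (Functor.congr_obj hT (X, Y)) ≫ η.map (P.braiding.hom.app (X, Y)) ≫
        eqToHom (Functor.congr_obj h2 (X, Y)) from hαapp X Y]
  simp [eqToHom_trans]
end

section
/- A functor F : C → D between small categories induces an equivalence of functor categories [F, Z] : [D, Z] → [C, Z] for every groupoid Z if and only if the induced functor Π₁(F) : Π₁(C) → Π₁(D) between free groupoids is an equivalence of categories. -/
open CategoryTheory

universe u

/-- The arrow category of a groupoid is a groupoid. -/
noncomputable instance arrowGroupoidAux (Z : Type u) [Groupoid.{u} Z] :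
    Groupoid.{u} (Arrow Z) :=
  Groupoid.ofIsIso fun {X Y} f => by
    have h : f = (Comma.isoMk (asIso f.left) (asIso f.right) (by simp)).hom := rfl
    rw [h]; exact Iso.isIso_hom _

/-- Encode a natural transformation as a functor into the arrow category. -/
@[simps]
def natTransFunctorAux {C Z : Type u} [Category.{u} C] [Category.{u} Z]
    {F1 F2 : C ⥤ Z} (α : F1 ⟶ F2) : C ⥤ Arrow Z where
  obj x := Arrow.mk (α.app x)
  map f := Arrow.homMk (u := F1.map f) (v := F2.map f) (α.naturality f)
  map_id x := by ext <;> simp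
  map_comp f g := by ext <;> simp

lemma arrowHomOfEqAux {Z : Type u} [Category.{u} Z] {a b : Arrow Z} (h : a = b) :
    a.hom = eqToHom (congrArg Arrow.left h) ≫ b.hom ≫ eqToHom (congrArg Arrow.right h).symm := by
  subst h; simp

/-- If `η` exhibits `GC` as the free groupoid on `C`, then precomposition with `η`
is an equivalence of functor categories into any groupoid. -/
theorem whiskerIsEquivAux {C GC : Type u} [Category.{u} C] [Groupoid.{u} GC]
    {ηC : C ⥤ GC} (hC : IsFreeGroupoidOn ηC) (Z : Type u) [Groupoid.{u} Z] :
    ((Functor.whiskeringLeft C GC Z).obj ηC).IsEquivalence := by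
  have faithful : ((Functor.whiskeringLeft C GC Z).obj ηC).Faithful := by
    constructor
    intro F1 F2 α β h
    have h1 : ηC ⋙ natTransFunctorAux α = natTransFunctorAux (Functor.whiskerLeft ηC α) := rfl
    have h2 : ηC ⋙ natTransFunctorAux β = natTransFunctorAux (Functor.whiskerLeft ηC α) := by
      have : Functor.whiskerLeft ηC α = Functor.whiskerLeft ηC β := h
      rw [this]
      rfl
    have key := (hC (Arrow Z) (natTransFunctorAux (Functor.whiskerLeft ηC α))).unique h1 h2
    ext x
    exact Arrow.mk_injective _ _ (Functor.congr_obj key x)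
  have full : ((Functor.whiskeringLeft C GC Z).obj ηC).Full := by
    constructor
    intro F1 F2 γ
    obtain ⟨A, hA, -⟩ := hC (Arrow Z) (natTransFunctorAux γ)
    have hL : A ⋙ Arrow.leftFunc = F1 := by
      have h1 : ηC ⋙ (A ⋙ Arrow.leftFunc) = ηC ⋙ F1 := by
        calc ηC ⋙ A ⋙ Arrow.leftFunc = (ηC ⋙ A) ⋙ Arrow.leftFunc := rfl
          _ = natTransFunctorAux γ ⋙ Arrow.leftFunc := by rw [hA]
          _ = ηC ⋙ F1 := rfl
      exact (hC Z (ηC ⋙ F1)).unique h1 rfl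
    have hR : A ⋙ Arrow.rightFunc = F2 := by
      have h1 : ηC ⋙ (A ⋙ Arrow.rightFunc) = ηC ⋙ F2 := by
        calc ηC ⋙ A ⋙ Arrow.rightFunc = (ηC ⋙ A) ⋙ Arrow.rightFunc := rfl
          _ = natTransFunctorAux γ ⋙ Arrow.rightFunc := by rw [hA]
          _ = ηC ⋙ F2 := rfl
      exact (hC Z (ηC ⋙ F2)).unique h1 rfl
    refine ⟨{ app := fun x => eqToHom (Functor.congr_obj hL x).symm ≫ (A.obj x).hom ≫
        eqToHom (Functor.congr_obj hR x), naturality := ?_ }, ?_⟩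
    · intro x y f
      have wl := Functor.congr_hom hL.symm f
      have wr := Functor.congr_hom hR.symm f
      have w := (A.map f).w
      clear wl wr
      subst hL hR
      simp only [eqToHom_refl, Category.id_comp, Category.comp_id]
      erw [eqToHom_refl, eqToHom_refl, Category.comp_id, Category.comp_id]
      exact w
    · ext c
      have hc := Functor.congr_obj hA c
      have := arrowHomOfEqAux hc
      simp only [Functor.comp_obj] at this
      simp only [Functor.whiskeringLeft_obj_map, Functor.whiskerLeft_app]
      rw [eqToHom_comp_iff]
      erw [comp_eqToHom_iff]
      rw [Category.assoc]
      exact this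
  have essSurj : ((Functor.whiskeringLeft C GC Z).obj ηC).EssSurj :=
    ⟨fun K => ⟨(hC Z K).exists.choose, ⟨eqToIso (hC Z K).exists.choose_spec⟩⟩⟩
  exact { faithful := faithful, full := full, essSurj := essSurj }

/-- A functor `F : C ⥤ D` induces an equivalence of functor categories
`[D, Z] ⥤ [C, Z]` for every groupoid `Z` if and only if the induced functor
`Π₁(F) : Π₁(C) ⥤ Π₁(D)` between free groupoids is an equivalence of
categories. -/
theorem precomposition_equivalence_iff_freeGroupoid_equivalence
    {C D GC GD : Type u} [Category.{u} C] [Category.{u} D]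
    [Groupoid.{u} GC] [Groupoid.{u} GD]
    (ηC : C ⥤ GC) (ηD : D ⥤ GD)
    (hC : IsFreeGroupoidOn ηC) (hD : IsFreeGroupoidOn ηD)
    (F : C ⥤ D) (F' : GC ⥤ GD) (hF' : ηC ⋙ F' = F ⋙ ηD) :
    (∀ (Z : Type u) [Groupoid.{u} Z],
        ((Functor.whiskeringLeft C D Z).obj F).IsEquivalence) ↔ F'.IsEquivalence := by
  have key : ∀ (Z : Type u) [Groupoid.{u} Z],
      (Functor.whiskeringLeft GC GD Z).obj F' ⋙ (Functor.whiskeringLeft C GC Z).obj ηC =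
      (Functor.whiskeringLeft D GD Z).obj ηD ⋙ (Functor.whiskeringLeft C D Z).obj F := by
    intro Z _
    rw [← Functor.whiskeringLeft_obj_comp, ← Functor.whiskeringLeft_obj_comp, hF']
  constructor
  · intro hW
    have hwl : ∀ (Z : Type u) [Groupoid.{u} Z],
        ((Functor.whiskeringLeft GC GD Z).obj F').IsEquivalence := by
      intro Z _
      haveI := whiskerIsEquivAux hC Z
      haveI := whiskerIsEquivAux hD Z
      haveI := hW Z
      haveI : ((Functor.whiskeringLeft GC GD Z).obj F' ⋙
          (Functor.whiskeringLeft C GC Z).obj ηC).IsEquivalence := by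
        rw [key Z]; infer_instance
      exact Functor.isEquivalence_of_comp_right ((Functor.whiskeringLeft GC GD Z).obj F')
        ((Functor.whiskeringLeft C GC Z).obj ηC)
    haveI := hwl GC
    haveI := hwl GD
    let G : GD ⥤ GC := ((Functor.whiskeringLeft GC GD GC).obj F').objPreimage (𝟭 GC)
    have i : F' ⋙ G ≅ 𝟭 GC := ((Functor.whiskeringLeft GC GD GC).obj F').objObjPreimageIso (𝟭 GC)
    have ff : ((Functor.whiskeringLeft GC GD GD).obj F').FullyFaithful := .ofFullyFaithful _
    have e : F' ⋙ (G ⋙ F') ≅ F' ⋙ 𝟭 GD :=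
      (Functor.associator F' G F').symm ≪≫ Functor.isoWhiskerRight i F' ≪≫ F'.leftUnitor ≪≫
        (Functor.rightUnitor F').symm
    have counit : G ⋙ F' ≅ 𝟭 GD := ff.preimageIso e
    exact (CategoryTheory.Equivalence.mk F' G i.symm counit).isEquivalence_functor
  · intro hF'e Z _
    haveI := hF'e
    haveI := whiskerIsEquivAux hC Z
    haveI := whiskerIsEquivAux hD Z
    haveI : ((Functor.whiskeringLeft D GD Z).obj ηD ⋙
        (Functor.whiskeringLeft C D Z).obj F).IsEquivalence := by
      rw [← key Z]; infer_instance
    exact Functor.isEquivalence_of_comp_left ((Functor.whiskeringLeft D GD Z).obj ηD)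
        ((Functor.whiskeringLeft C D Z).obj F)
end
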